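/- The function f₀(X) = 1/√(det(1 + XᵗX)) on M₂(ℝ) satisfies the ultrahyperbolic equation ∂²f₀/∂x11∂x22 − ∂²f₀/∂x12∂x21 = 0. -/

import Mathlib

set_option maxHeartbeats 1000000

open Matrix

/-- ℝ⁴ identified with M₂(ℝ) via coordinates x (i,j) = x_{ij}. -/
abbrev E : Type := Fin 2 × Fin 2 → ℝ

/-- Partial derivative with respect to the coordinate x_p. -/
noncomputable def pder (p : Fin 2 × Fin 2) (f : E → ℝ) (x : E) : ℝ :=
  deriv (fun t : ℝ => f (x + t • (Pi.single p (1 : ℝ) : E))) 0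

/-- The coordinate matrix X. -/
def Xof (x : E) : Matrix (Fin 2) (Fin 2) ℝ := Matrix.of fun i j => x (i, j)

/-- f₀(X) = 1/√(det(1+XᵗX)). -/
noncomputable def f₀ (x : E) : ℝ :=
  (Real.sqrt ((1 + (Xof x)ᵀ * Xof x).det))⁻¹

/-! Auxiliary development. -/

def Dl (y : E) : ℝ := 1 + y (0,0)^2 + y (0,1)^2 + y (1,0)^2 + y (1,1)^2 +
  (y (0,0)*y (1,1) - y (0,1)*y (1,0))^2

lemma Dl_pos (y : E) : 0 < Dl y := by unfold Dl; positivity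

lemma f0_eq (y : E) : f₀ y = (Real.sqrt (Dl y))⁻¹ := by
  unfold f₀ Dl Xof
  congr 2
  rw [Matrix.det_fin_two]
  simp [Matrix.mul_apply, Fin.sum_univ_two, Matrix.one_apply]
  ring

lemma hasDerivAt_invSqrt {u : ℝ → ℝ} {u' t : ℝ} (hu : HasDerivAt u u' t)
    (hpos : 0 < u t) :
    HasDerivAt (fun s => (Real.sqrt (u s))⁻¹)
      (-(u' / (2 * Real.sqrt (u t) * u t))) t := by
  have h1 := (Real.hasDerivAt_sqrt (ne_of_gt hpos)).comp t hu
  have hs : Real.sqrt (u t) ≠ 0 := by positivity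
  have h2 := h1.inv (by simpa [Function.comp] using hs)
  convert h2 using 1 <;> try rfl
  rw [Function.comp_apply, Real.sq_sqrt hpos.le]
  field_simp
  try ring

noncomputable def F11 (y : E) : ℝ :=
  -((y (1,1) + y (0,0) * (y (0,0)*y (1,1) - y (0,1)*y (1,0))) /
      (Real.sqrt (Dl y) * Dl y))

noncomputable def F10 (y : E) : ℝ :=
  -((y (1,0) - y (0,1) * (y (0,0)*y (1,1) - y (0,1)*y (1,0))) /
      (Real.sqrt (Dl y) * Dl y))

lemma pder11 (y : E) : pder ((1:Fin 2),(1:Fin 2)) f₀ y = F11 y := by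
  have hfun : (fun t : ℝ => f₀ (y + t • (Pi.single ((1:Fin 2),(1:Fin 2)) (1:ℝ) : E)))
      = fun t => (Real.sqrt ((1 + y (0,0)^2 + y (0,1)^2 + y (1,0)^2) + (y (1,1)+t)^2
          + (y (0,0)*(y (1,1)+t) - y (0,1)*y (1,0))^2))⁻¹ := by
    funext t
    rw [f0_eq]
    congr 1
    congr 1
    simp [Dl, Pi.single_apply, Prod.mk.injEq]
    try ring
  have h1 : HasDerivAt (fun t:ℝ => y (1,1) + t) 1 0 := by
    simpa using (hasDerivAt_id (0:ℝ)).const_add (y (1,1))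
  have h2 := h1.pow 2
  have h3 := ((h1.const_mul (y (0,0))).sub_const (y (0,1)*y (1,0))).pow 2
  have hQ : HasDerivAt (fun t : ℝ => (1 + y (0,0)^2 + y (0,1)^2 + y (1,0)^2) + (y (1,1)+t)^2
        + (y (0,0)*(y (1,1)+t) - y (0,1)*y (1,0))^2)
      (2*(y (1,1) + y (0,0)*(y (0,0)*y (1,1) - y (0,1)*y (1,0)))) 0 := by
    have h4 := ((hasDerivAt_const (0:ℝ) (1 + y (0,0)^2 + y (0,1)^2 + y (1,0)^2)).add h2).add h3
    convert h4 using 1 <;> try rfl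
    push_cast
    ring
  have hpos : (0:ℝ) < (1 + y (0,0)^2 + y (0,1)^2 + y (1,0)^2) + (y (1,1)+0)^2
      + (y (0,0)*(y (1,1)+0) - y (0,1)*y (1,0))^2 := by positivity
  have hD := (hasDerivAt_invSqrt hQ hpos).deriv
  have hDl : Dl y = (1 + y (0,0)^2 + y (0,1)^2 + y (1,0)^2) + (y (1,1)+0)^2
      + (y (0,0)*(y (1,1)+0) - y (0,1)*y (1,0))^2 := by
    simp [Dl]
    try ring
  show deriv _ 0 = _
  rw [hfun, hD]
  unfold F11
  rw [← hDl]
  have hs : Real.sqrt (Dl y) ≠ 0 := by have := Dl_pos y; positivity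
  have hd : Dl y ≠ 0 := (Dl_pos y).ne'
  field_simp
  try ring

lemma pder10 (y : E) : pder ((1:Fin 2),(0:Fin 2)) f₀ y = F10 y := by
  have hfun : (fun t : ℝ => f₀ (y + t • (Pi.single ((1:Fin 2),(0:Fin 2)) (1:ℝ) : E)))
      = fun t => (Real.sqrt ((1 + y (0,0)^2 + y (0,1)^2 + y (1,1)^2) + (y (1,0)+t)^2
          + (y (0,0)*y (1,1) - y (0,1)*(y (1,0)+t))^2))⁻¹ := by
    funext t
    rw [f0_eq]
    congr 1
    congr 1
    simp [Dl, Pi.single_apply, Prod.mk.injEq]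
    try ring
  have h1 : HasDerivAt (fun t:ℝ => y (1,0) + t) 1 0 := by
    simpa using (hasDerivAt_id (0:ℝ)).const_add (y (1,0))
  have h2 := h1.pow 2
  have h3 := ((h1.const_mul (y (0,1))).const_sub (y (0,0)*y (1,1))).pow 2
  have hQ : HasDerivAt (fun t : ℝ => (1 + y (0,0)^2 + y (0,1)^2 + y (1,1)^2) + (y (1,0)+t)^2
        + (y (0,0)*y (1,1) - y (0,1)*(y (1,0)+t))^2)
      (2*(y (1,0) - y (0,1)*(y (0,0)*y (1,1) - y (0,1)*y (1,0)))) 0 := by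
    have h4 := ((hasDerivAt_const (0:ℝ) (1 + y (0,0)^2 + y (0,1)^2 + y (1,1)^2)).add h2).add h3
    convert h4 using 1 <;> try rfl
    push_cast
    ring
  have hpos : (0:ℝ) < (1 + y (0,0)^2 + y (0,1)^2 + y (1,1)^2) + (y (1,0)+0)^2
      + (y (0,0)*y (1,1) - y (0,1)*(y (1,0)+0))^2 := by positivity
  have hD := (hasDerivAt_invSqrt hQ hpos).deriv
  have hDl : Dl y = (1 + y (0,0)^2 + y (0,1)^2 + y (1,1)^2) + (y (1,0)+0)^2
      + (y (0,0)*y (1,1) - y (0,1)*(y (1,0)+0))^2 := by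
    simp [Dl]
    try ring
  show deriv _ 0 = _
  rw [hfun, hD]
  unfold F10
  rw [← hDl]
  have hs : Real.sqrt (Dl y) ≠ 0 := by have := Dl_pos y; positivity
  have hd : Dl y ≠ 0 := (Dl_pos y).ne'
  field_simp
  try ring

lemma pder00F11 (x : E) :
    pder ((0:Fin 2),(0:Fin 2)) F11 x =
      (-((x (0,0)*x (1,1) - x (0,1)*x (1,0)) + x (0,0)*x (1,1)) * Dl x
        + 3*(x (1,1) + x (0,0)*(x (0,0)*x (1,1) - x (0,1)*x (1,0)))
            *(x (0,0) + x (1,1)*(x (0,0)*x (1,1) - x (0,1)*x (1,0))))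
        / (Real.sqrt (Dl x) * (Dl x)^2) := by
  have hfun : (fun t : ℝ => F11 (x + t • (Pi.single ((0:Fin 2),(0:Fin 2)) (1:ℝ) : E)))
      = fun t => -((x (1,1) + (x (0,0)+t)*((x (0,0)+t)*x (1,1) - x (0,1)*x (1,0))) *
          ((Real.sqrt (((1 + (x (0,0)+t)^2) + (x (0,1)^2 + x (1,0)^2 + x (1,1)^2))
              + ((x (0,0)+t)*x (1,1) - x (0,1)*x (1,0))^2))⁻¹ *
           ((((1 + (x (0,0)+t)^2) + (x (0,1)^2 + x (1,0)^2 + x (1,1)^2))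
              + ((x (0,0)+t)*x (1,1) - x (0,1)*x (1,0))^2))⁻¹)) := by
    funext t
    have hX : Dl (x + t • (Pi.single ((0:Fin 2),(0:Fin 2)) (1:ℝ) : E))
        = ((1 + (x (0,0)+t)^2) + (x (0,1)^2 + x (1,0)^2 + x (1,1)^2))
            + ((x (0,0)+t)*x (1,1) - x (0,1)*x (1,0))^2 := by
      simp [Dl, Pi.single_apply, Prod.mk.injEq]
      try ring
    have c00 : (x + t • (Pi.single ((0:Fin 2),(0:Fin 2)) (1:ℝ) : E)) ((0:Fin 2),(0:Fin 2))
        = x (0,0) + t := by simp [Pi.single_apply]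
    have c01 : (x + t • (Pi.single ((0:Fin 2),(0:Fin 2)) (1:ℝ) : E)) ((0:Fin 2),(1:Fin 2))
        = x (0,1) := by simp [Pi.single_apply, Prod.mk.injEq]
    have c10 : (x + t • (Pi.single ((0:Fin 2),(0:Fin 2)) (1:ℝ) : E)) ((1:Fin 2),(0:Fin 2))
        = x (1,0) := by simp [Pi.single_apply, Prod.mk.injEq]
    have c11 : (x + t • (Pi.single ((0:Fin 2),(0:Fin 2)) (1:ℝ) : E)) ((1:Fin 2),(1:Fin 2))
        = x (1,1) := by simp [Pi.single_apply, Prod.mk.injEq]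
    simp only [F11]
    rw [hX, c00, c01, c10, c11]
    have hXpos : (0:ℝ) < ((1 + (x (0,0)+t)^2) + (x (0,1)^2 + x (1,0)^2 + x (1,1)^2))
        + ((x (0,0)+t)*x (1,1) - x (0,1)*x (1,0))^2 := by positivity
    have hsne : Real.sqrt (((1 + (x (0,0)+t)^2) + (x (0,1)^2 + x (1,0)^2 + x (1,1)^2))
        + ((x (0,0)+t)*x (1,1) - x (0,1)*x (1,0))^2) ≠ 0 := by positivity
    field_simp
    try ring
  have h1 : HasDerivAt (fun t:ℝ => x (0,0) + t) 1 0 := by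
    simpa using (hasDerivAt_id (0:ℝ)).const_add (x (0,0))
  have hΔ := (h1.mul_const (x (1,1))).sub_const (x (0,1)*x (1,0))
  have hQ := (((h1.pow 2).const_add 1).add_const (x (0,1)^2 + x (1,0)^2 + x (1,1)^2)).add
      (hΔ.pow 2)
  have hQ0pos : (0:ℝ) < ((1 + (x (0,0)+0)^2) + (x (0,1)^2 + x (1,0)^2 + x (1,1)^2))
      + ((x (0,0)+0)*x (1,1) - x (0,1)*x (1,0))^2 := by positivity
  have hInv1 := hasDerivAt_invSqrt hQ hQ0pos
  have hInv2 := hQ.inv hQ0pos.ne'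
  have hN := (h1.mul hΔ).const_add (x (1,1))
  have hG := ((hN.mul (hInv1.mul hInv2)).neg).deriv
  show deriv _ 0 = _
  rw [hfun]; erw [hG]; simp only [Pi.add_apply, Pi.mul_apply, Pi.pow_apply, Pi.inv_apply, Pi.neg_apply]
  have hDl : Dl x = ((1 + (x (0,0)+0)^2) + (x (0,1)^2 + x (1,0)^2 + x (1,1)^2))
      + ((x (0,0)+0)*x (1,1) - x (0,1)*x (1,0))^2 := by
    simp [Dl]
    try ring
  rw [← hDl]
  have hpos := Dl_pos x
  set s := Real.sqrt (Dl x) with hsdef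
  have hs2 : s^2 = Dl x := Real.sq_sqrt hpos.le
  have hspos : (0:ℝ) < s := Real.sqrt_pos.2 hpos
  rw [← hs2]
  field_simp
  ring

lemma pder01F10 (x : E) :
    pder ((0:Fin 2),(1:Fin 2)) F10 x =
      (((x (0,0)*x (1,1) - x (0,1)*x (1,0)) - x (0,1)*x (1,0)) * Dl x
        + 3*(x (1,0) - x (0,1)*(x (0,0)*x (1,1) - x (0,1)*x (1,0)))
            *(x (0,1) - x (1,0)*(x (0,0)*x (1,1) - x (0,1)*x (1,0))))
        / (Real.sqrt (Dl x) * (Dl x)^2) := by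
  have hfun : (fun t : ℝ => F10 (x + t • (Pi.single ((0:Fin 2),(1:Fin 2)) (1:ℝ) : E)))
      = fun t => -((x (1,0) - (x (0,1)+t)*(x (0,0)*x (1,1) - (x (0,1)+t)*x (1,0))) *
          ((Real.sqrt (((1 + (x (0,1)+t)^2) + (x (0,0)^2 + x (1,0)^2 + x (1,1)^2))
              + (x (0,0)*x (1,1) - (x (0,1)+t)*x (1,0))^2))⁻¹ *
           ((((1 + (x (0,1)+t)^2) + (x (0,0)^2 + x (1,0)^2 + x (1,1)^2))
              + (x (0,0)*x (1,1) - (x (0,1)+t)*x (1,0))^2))⁻¹)) := by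
    funext t
    have hX : Dl (x + t • (Pi.single ((0:Fin 2),(1:Fin 2)) (1:ℝ) : E))
        = ((1 + (x (0,1)+t)^2) + (x (0,0)^2 + x (1,0)^2 + x (1,1)^2))
            + (x (0,0)*x (1,1) - (x (0,1)+t)*x (1,0))^2 := by
      simp [Dl, Pi.single_apply, Prod.mk.injEq]
      try ring
    have c00 : (x + t • (Pi.single ((0:Fin 2),(1:Fin 2)) (1:ℝ) : E)) ((0:Fin 2),(0:Fin 2))
        = x (0,0) := by simp [Pi.single_apply, Prod.mk.injEq]
    have c01 : (x + t • (Pi.single ((0:Fin 2),(1:Fin 2)) (1:ℝ) : E)) ((0:Fin 2),(1:Fin 2))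
        = x (0,1) + t := by simp [Pi.single_apply]
    have c10 : (x + t • (Pi.single ((0:Fin 2),(1:Fin 2)) (1:ℝ) : E)) ((1:Fin 2),(0:Fin 2))
        = x (1,0) := by simp [Pi.single_apply, Prod.mk.injEq]
    have c11 : (x + t • (Pi.single ((0:Fin 2),(1:Fin 2)) (1:ℝ) : E)) ((1:Fin 2),(1:Fin 2))
        = x (1,1) := by simp [Pi.single_apply, Prod.mk.injEq]
    simp only [F10]
    rw [hX, c00, c01, c10, c11]
    have hXpos : (0:ℝ) < ((1 + (x (0,1)+t)^2) + (x (0,0)^2 + x (1,0)^2 + x (1,1)^2))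
        + (x (0,0)*x (1,1) - (x (0,1)+t)*x (1,0))^2 := by positivity
    have hsne : Real.sqrt (((1 + (x (0,1)+t)^2) + (x (0,0)^2 + x (1,0)^2 + x (1,1)^2))
        + (x (0,0)*x (1,1) - (x (0,1)+t)*x (1,0))^2) ≠ 0 := by positivity
    field_simp
    try ring
  have h1 : HasDerivAt (fun t:ℝ => x (0,1) + t) 1 0 := by
    simpa using (hasDerivAt_id (0:ℝ)).const_add (x (0,1))
  have hΔ := (h1.mul_const (x (1,0))).const_sub (x (0,0)*x (1,1))
  have hQ := (((h1.pow 2).const_add 1).add_const (x (0,0)^2 + x (1,0)^2 + x (1,1)^2)).add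
      (hΔ.pow 2)
  have hQ0pos : (0:ℝ) < ((1 + (x (0,1)+0)^2) + (x (0,0)^2 + x (1,0)^2 + x (1,1)^2))
      + (x (0,0)*x (1,1) - (x (0,1)+0)*x (1,0))^2 := by positivity
  have hInv1 := hasDerivAt_invSqrt hQ hQ0pos
  have hInv2 := hQ.inv hQ0pos.ne'
  have hN := (h1.mul hΔ).const_sub (x (1,0))
  have hG := ((hN.mul (hInv1.mul hInv2)).neg).deriv
  show deriv _ 0 = _
  rw [hfun]; erw [hG]; simp only [Pi.add_apply, Pi.mul_apply, Pi.pow_apply, Pi.inv_apply, Pi.neg_apply]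
  have hDl : Dl x = ((1 + (x (0,1)+0)^2) + (x (0,0)^2 + x (1,0)^2 + x (1,1)^2))
      + (x (0,0)*x (1,1) - (x (0,1)+0)*x (1,0))^2 := by
    simp [Dl]
    try ring
  rw [← hDl]
  have hpos := Dl_pos x
  set s := Real.sqrt (Dl x) with hsdef
  have hs2 : s^2 = Dl x := Real.sq_sqrt hpos.le
  have hspos : (0:ℝ) < s := Real.sqrt_pos.2 hpos
  rw [← hs2]
  field_simp
  ring

/-- f₀ satisfies the ultrahyperbolic equation ∂²f₀/∂x11∂x22 − ∂²f₀/∂x12∂x21 = 0. -/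
theorem f₀_ultrahyperbolic :
    ∀ x : E,
      pder ((0 : Fin 2), (0 : Fin 2)) (pder ((1 : Fin 2), (1 : Fin 2)) f₀) x -
        pder ((0 : Fin 2), (1 : Fin 2)) (pder ((1 : Fin 2), (0 : Fin 2)) f₀) x = 0 := by
  intro x
  have e1 : pder ((1:Fin 2),(1:Fin 2)) f₀ = F11 := funext pder11
  have e2 : pder ((1:Fin 2),(0:Fin 2)) f₀ = F10 := funext pder10
  rw [e1, e2, pder00F11, pder01F10, div_sub_div_same, div_eq_zero_iff]
  left
  unfold Dl
  ring
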